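/- For all u ∈ ℝ, the series T(u) = ∑_{n=0}^∞ uⁿ/(2n+1)! converges; T(u) = sinh(√u)/√u for u > 0, T(u) = sin(√(-u))/√(-u) for u < 0, and T(0) = 1. Moreover T(u) > 0 whenever u > -π². -/

import Mathlib

open Real

/-- Analytic extension of `sinh (√u) / √u` to all real `u`,
given by the power series `∑ uⁿ/(2n+1)!`. -/
noncomputable def T (u : ℝ) : ℝ := ∑' n : ℕ, u ^ n / (2 * n + 1).factorial

lemma T_summable (u : ℝ) : Summable (fun n : ℕ => u ^ n / ((2 * n + 1).factorial : ℝ)) := by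
  apply Summable.of_abs
  refine Summable.of_nonneg_of_le (fun n => abs_nonneg _) (fun n => ?_)
    (Real.summable_pow_div_factorial |u|)
  rw [abs_div, abs_pow, Nat.abs_cast]
  apply div_le_div_of_nonneg_left (pow_nonneg (abs_nonneg u) n) (by positivity)
  exact_mod_cast Nat.factorial_le (by omega)

lemma T_hasSum_pos {u : ℝ} (hu : 0 < u) :
    HasSum (fun n : ℕ => u ^ n / ((2 * n + 1).factorial : ℝ))
      (Real.sinh (Real.sqrt u) / Real.sqrt u) := by
  set s := Real.sqrt u with hs
  have hs0 : 0 < s := Real.sqrt_pos.mpr hu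
  have hsq : s ^ 2 = u := Real.sq_sqrt hu.le
  have := (Real.hasSum_sinh s).div_const s
  convert this using 2 with n
  · rfl
  field_simp
  rw [← hsq]
  ring

lemma T_hasSum_neg {u : ℝ} (hu : u < 0) :
    HasSum (fun n : ℕ => u ^ n / ((2 * n + 1).factorial : ℝ))
      (Real.sin (Real.sqrt (-u)) / Real.sqrt (-u)) := by
  set s := Real.sqrt (-u) with hs
  have hs0 : 0 < s := Real.sqrt_pos.mpr (by linarith)
  have hsq : s ^ 2 = -u := Real.sq_sqrt (by linarith)
  have hu' : u = -s ^ 2 := by linarith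
  have := (Real.hasSum_sin s).div_const s
  convert this using 2 with n
  · rfl
  have h2 : s ^ (2 * n + 1) = (s ^ 2) ^ n * s := by rw [pow_succ, pow_mul]
  rw [hu', h2]
  field_simp
  ring

theorem stmt_14 (u : ℝ) :
    Summable (fun n : ℕ => u ^ n / ((2 * n + 1).factorial : ℝ)) ∧
    (0 < u → T u = Real.sinh (Real.sqrt u) / Real.sqrt u) ∧
    (u < 0 → T u = Real.sin (Real.sqrt (-u)) / Real.sqrt (-u)) ∧
    T 0 = 1 ∧
    (-π ^ 2 < u → 0 < T u) := by
  have hT0 : T 0 = 1 := by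
    rw [T, tsum_eq_single 0 (by intro n hn; simp [zero_pow hn])]
    simp
  refine ⟨T_summable u, fun hu => (T_hasSum_pos hu).tsum_eq,
    fun hu => (T_hasSum_neg hu).tsum_eq, hT0, fun hu => ?_⟩
  rcases lt_trichotomy u 0 with h | h | h
  · rw [show T u = _ from (T_hasSum_neg h).tsum_eq]
    have hs0 : 0 < Real.sqrt (-u) := Real.sqrt_pos.mpr (by linarith)
    have hsπ : Real.sqrt (-u) < π := by
      have : -u < π ^ 2 := by linarith
      calc Real.sqrt (-u) < Real.sqrt (π ^ 2) := by
            exact Real.sqrt_lt_sqrt (by linarith) this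
        _ = π := by rw [Real.sqrt_sq pi_pos.le]
    exact div_pos (Real.sin_pos_of_pos_of_lt_pi hs0 hsπ) hs0
  · rw [h, hT0]; norm_num
  · rw [show T u = _ from (T_hasSum_pos h).tsum_eq]
    have hs0 : 0 < Real.sqrt u := Real.sqrt_pos.mpr h
    exact div_pos (by positivity) hs0
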